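/- Let d ≥ 1 and n be integers with 2n > d·⌈√d⌉·(⌈√d⌉ + 2), and let G be a graph whose vertex set is partitioned into sets A, B, C with |A| = n, |B| = ⌈√d⌉·n and |C| = d such that: A, B and C are each independent sets; every vertex of A has all of its neighbours in B; every vertex of B has at most ⌈√d⌉ neighbours in A; every vertex of C has all of its neighbours in B; and there are no edges between A and C. Then G contains no S_ℓ-factor for any integer ℓ ≥ ⌈√d⌉ + 2. -/

import Mathlib

/-- `P` is an `S_ℓ`-packing in `G`: a finite collection of pairwise vertex-disjoint
stars (given as a pair (centre, set of leaves)), each of size at least `ℓ`. -/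
def IsStarPacking {V : Type*} (G : SimpleGraph V) (ℓ : ℕ)
    (P : Finset (V × Finset V)) : Prop :=
  (∀ p ∈ P, ℓ ≤ p.2.card ∧ p.1 ∉ p.2 ∧ ∀ x ∈ p.2, G.Adj p.1 x) ∧
  ∀ p ∈ P, ∀ q ∈ P, p ≠ q →
    Disjoint (insert p.1 (↑p.2 : Set V)) (insert q.1 (↑q.2 : Set V))

/-- The packing `P` covers the vertex set `U`. -/
def PackingCovers {V : Type*} (P : Finset (V × Finset V)) (U : Set V) : Prop :=
  ∀ v ∈ U, ∃ p ∈ P, v = p.1 ∨ v ∈ p.2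

/-- If `2n > d⌈√d⌉(⌈√d⌉ + 2)` and `G` is partitioned into independent sets `A`, `B`,
`C` with `|A| = n`, `|B| = ⌈√d⌉ n`, `|C| = d`, where all neighbours of `A`-vertices and
of `C`-vertices lie in `B`, every `B`-vertex has at most `⌈√d⌉` neighbours in `A`, and
there are no `A`–`C` edges, then `G` has no `S_ℓ`-factor for any `ℓ ≥ ⌈√d⌉ + 2`. -/
theorem no_star_factor_in_construction {V : Type*} [Fintype V] [DecidableEq V]
    (G : SimpleGraph V) (d n : ℕ) (hd : 1 ≤ d)
    (hn : d * ⌈Real.sqrt d⌉₊ * (⌈Real.sqrt d⌉₊ + 2) < 2 * n)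
    (A B C : Finset V)
    (hAB : Disjoint A B) (hAC : Disjoint A C) (hBC : Disjoint B C)
    (hunion : A ∪ B ∪ C = Finset.univ)
    (hcardA : A.card = n) (hcardB : B.card = ⌈Real.sqrt d⌉₊ * n) (hcardC : C.card = d)
    (hindA : ∀ v ∈ A, ∀ w ∈ A, ¬ G.Adj v w)
    (hindB : ∀ v ∈ B, ∀ w ∈ B, ¬ G.Adj v w)
    (hindC : ∀ v ∈ C, ∀ w ∈ C, ¬ G.Adj v w)
    (hAnbrs : ∀ a ∈ A, G.neighborSet a ⊆ ↑B)
    (hBdegA : ∀ b ∈ B, (G.neighborSet b ∩ ↑A).ncard ≤ ⌈Real.sqrt d⌉₊)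
    (hCnbrs : ∀ c ∈ C, G.neighborSet c ⊆ ↑B)
    (hACedges : ∀ a ∈ A, ∀ c ∈ C, ¬ G.Adj a c) :
    ∀ ℓ : ℕ, ⌈Real.sqrt d⌉₊ + 2 ≤ ℓ →
      ¬ ∃ P : Finset (V × Finset V), IsStarPacking G ℓ P ∧ PackingCovers P Set.univ := by
  classical
  rintro ℓ hℓ ⟨P, ⟨hstar, hdisj⟩, hcov⟩
  set s := ⌈Real.sqrt d⌉₊ with hs
  have hmem : ∀ v : V, v ∈ A ∪ B ∪ C := by
    intro v; rw [hunion]; exact Finset.mem_univ v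
  -- leaves of A- or C-centered stars lie in B
  have hleafB : ∀ p ∈ P, (p.1 ∈ A ∨ p.1 ∈ C) → p.2 ⊆ B := by
    intro p hp h1 x hx
    have hadj := (hstar p hp).2.2 x hx
    rcases h1 with h | h
    · exact Finset.mem_coe.mp (hAnbrs p.1 h hadj)
    · exact Finset.mem_coe.mp (hCnbrs p.1 h hadj)
  -- leaves of B-centered stars lie in A ∪ C
  have hleafAC : ∀ p ∈ P, p.1 ∈ B → p.2 ⊆ A ∪ C := by
    intro p hp h1 x hx
    have hadj := (hstar p hp).2.2 x hx
    rcases Finset.mem_union.mp (hmem x) with h | h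
    · rcases Finset.mem_union.mp h with h | h
      · exact Finset.mem_union_left _ h
      · exact absurd hadj (hindB p.1 h1 x h)
    · exact Finset.mem_union_right _ h
  -- B-centered stars: at most s leaves in A
  have hBA : ∀ p ∈ P, p.1 ∈ B → (p.2 ∩ A).card ≤ s := by
    intro p hp h1
    have hsub : (↑(p.2 ∩ A) : Set V) ⊆ G.neighborSet p.1 ∩ ↑A := by
      intro x hx
      have hx' := Finset.mem_coe.mp hx
      exact ⟨(hstar p hp).2.2 x (Finset.mem_inter.mp hx').1,
        Finset.mem_coe.mpr (Finset.mem_inter.mp hx').2⟩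
    calc (p.2 ∩ A).card = (↑(p.2 ∩ A) : Set V).ncard := (Set.ncard_coe_finset _).symm
      _ ≤ (G.neighborSet p.1 ∩ ↑A).ncard := Set.ncard_le_ncard hsub (Set.toFinite _)
      _ ≤ s := hBdegA p.1 h1
  -- B-centered stars: at least ℓ - s leaves in C
  have hBC2 : ∀ p ∈ P, p.1 ∈ B → ℓ - s ≤ (p.2 ∩ C).card := by
    intro p hp h1
    have hsplit : p.2.card = (p.2 ∩ A).card + (p.2 ∩ C).card := by
      rw [← Finset.card_union_of_disjoint (hAC.mono (Finset.inter_subset_right)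
        (Finset.inter_subset_right))]
      congr 1
      rw [← Finset.inter_union_distrib_left, Finset.inter_eq_left.mpr (hleafAC p hp h1)]
    have h2 := (hstar p hp).1
    have h3 := hBA p hp h1
    omega
  -- leaf sets pairwise disjoint
  have hdisj2 : ∀ p ∈ P, ∀ q ∈ P, p ≠ q → Disjoint p.2 q.2 := by
    intro p hp q hq hne
    rw [← Finset.disjoint_coe]
    exact (hdisj p hp q hq hne).mono (Set.subset_insert _ _) (Set.subset_insert _ _)
  set PA := P.filter (fun p => p.1 ∈ A) with hPA
  set PB := P.filter (fun p => p.1 ∈ B) with hPB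
  -- (i) n ≤ |PA| + s * |PB|
  have hAcov : A ⊆ PA.image Prod.fst ∪ PB.biUnion (fun p => p.2 ∩ A) := by
    intro a ha
    obtain ⟨p, hp, hpa⟩ := hcov a (Set.mem_univ a)
    rcases hpa with heq | hleaf
    · refine Finset.mem_union_left _ (Finset.mem_image.mpr ⟨p, ?_, heq.symm⟩)
      exact Finset.mem_filter.mpr ⟨hp, heq ▸ ha⟩
    · rcases Finset.mem_union.mp (hmem p.1) with h | h
      · rcases Finset.mem_union.mp h with h | h
        · exact absurd (hleafB p hp (Or.inl h) hleaf) (fun hb => Finset.disjoint_left.mp hAB ha hb)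
        · refine Finset.mem_union_right _ (Finset.mem_biUnion.mpr ⟨p, Finset.mem_filter.mpr ⟨hp, h⟩, ?_⟩)
          exact Finset.mem_inter.mpr ⟨hleaf, ha⟩
      · exact absurd (hleafB p hp (Or.inr h) hleaf) (fun hb => Finset.disjoint_left.mp hAB ha hb)
  have h1 : n ≤ PA.card + s * PB.card := by
    calc n = A.card := hcardA.symm
      _ ≤ (PA.image Prod.fst ∪ PB.biUnion (fun p => p.2 ∩ A)).card :=
          Finset.card_le_card hAcov
      _ ≤ (PA.image Prod.fst).card + (PB.biUnion (fun p => p.2 ∩ A)).card :=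
          Finset.card_union_le _ _
      _ ≤ PA.card + ∑ p ∈ PB, (p.2 ∩ A).card :=
          add_le_add Finset.card_image_le Finset.card_biUnion_le
      _ ≤ PA.card + ∑ _p ∈ PB, s := by
          refine Nat.add_le_add_left (Finset.sum_le_sum fun p hp => ?_) _
          exact hBA p (Finset.mem_filter.mp hp).1 (Finset.mem_filter.mp hp).2
      _ = PA.card + s * PB.card := by rw [Finset.sum_const, smul_eq_mul, mul_comm]
  -- (ii) |PA| * ℓ ≤ s * n
  have h2 : PA.card * ℓ ≤ s * n := by
    have hsub : PA.biUnion (fun p => p.2) ⊆ B := by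
      intro x hx
      obtain ⟨p, hp, hx2⟩ := Finset.mem_biUnion.mp hx
      exact hleafB p (Finset.mem_filter.mp hp).1 (Or.inl (Finset.mem_filter.mp hp).2) hx2
    have hcard : (PA.biUnion (fun p => p.2)).card = ∑ p ∈ PA, p.2.card :=
      Finset.card_biUnion (fun p hp q hq hne =>
        hdisj2 p (Finset.mem_filter.mp hp).1 q (Finset.mem_filter.mp hq).1 hne)
    calc PA.card * ℓ = ∑ _p ∈ PA, ℓ := by rw [Finset.sum_const, smul_eq_mul]
      _ ≤ ∑ p ∈ PA, p.2.card :=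
          Finset.sum_le_sum fun p hp => (hstar p (Finset.mem_filter.mp hp).1).1
      _ = (PA.biUnion (fun p => p.2)).card := hcard.symm
      _ ≤ B.card := Finset.card_le_card hsub
      _ = s * n := hcardB
  -- (iii) |PB| * (ℓ - s) ≤ d
  have h3 : PB.card * (ℓ - s) ≤ d := by
    have hsub : PB.biUnion (fun p => p.2 ∩ C) ⊆ C := fun x hx => by
      obtain ⟨p, hp, hx2⟩ := Finset.mem_biUnion.mp hx
      exact (Finset.mem_inter.mp hx2).2
    have hcard : (PB.biUnion (fun p => p.2 ∩ C)).card = ∑ p ∈ PB, (p.2 ∩ C).card :=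
      Finset.card_biUnion (fun p hp q hq hne =>
        (hdisj2 p (Finset.mem_filter.mp hp).1 q (Finset.mem_filter.mp hq).1 hne).mono
          Finset.inter_subset_left Finset.inter_subset_left)
    calc PB.card * (ℓ - s) = ∑ _p ∈ PB, (ℓ - s) := by rw [Finset.sum_const, smul_eq_mul]
      _ ≤ ∑ p ∈ PB, (p.2 ∩ C).card :=
          Finset.sum_le_sum fun p hp =>
            hBC2 p (Finset.mem_filter.mp hp).1 (Finset.mem_filter.mp hp).2
      _ = (PB.biUnion (fun p => p.2 ∩ C)).card := hcard.symm
      _ ≤ C.card := Finset.card_le_card hsub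
      _ = d := hcardC
  -- numeric contradiction
  set a := PA.card
  set b := PB.card
  have f2 : a * (s + 2) ≤ s * n := le_trans (Nat.mul_le_mul_left a hℓ) h2
  have f3 : b * 2 ≤ d := le_trans (Nat.mul_le_mul_left b (by omega)) h3
  have f1 : n * (s + 2) ≤ (a + s * b) * (s + 2) := Nat.mul_le_mul_right _ h1
  nlinarith [f1, f2, f3, hn, Nat.mul_le_mul_right (s * (s + 2)) f3]
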